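/- Let m,ℓ ≥ 1 and λ = (λ_1,…,λ_m) ∈ P_{m,ℓ}. Then the projection π (applied to underlying cell sets) induces a bijection from the disjoint union ⨆_{i=0}^∞ L_λ((1,λ_1−i),(m,λ_1−ℓ−i)) onto the set L̂_λ of non-intersecting loops contained in λ̂, with inverse p ↦ π^{−1}(p) ∩ λ̄. -/

import Mathlib

open scoped BigOperators

/-- A cell of the plane `ℤ²`. -/
abbrev Cell : Type := ℤ × ℤ

/-- The partial order `⊴` on `ℤ²`: `(a,b) ⊴ (a',b')` iff `a ≥ a'` and `b ≥ b'`. -/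
def cellLE (u v : Cell) : Prop := v.1 ≤ u.1 ∧ v.2 ≤ u.2

/-- The cylinder `C_ω = ℤ²/ℤω`. -/
abbrev Cyl (ω : Cell) : Type := Cell ⧸ AddSubgroup.zmultiples ω

/-- The natural projection `π : ℤ² → C_ω`. -/
def pr (ω : Cell) : Cell → Cyl ω := QuotientAddGroup.mk

/-- The induced relation `⊴` on the cylinder: `x ⊴ y` iff some lifts satisfy `x̃ ⊴ ỹ`. -/
def cylLE (ω : Cell) (x y : Cyl ω) : Prop :=
  ∃ u v : Cell, pr ω u = x ∧ pr ω v = y ∧ cellLE u v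

/-- The hook of `x` in a diagram `Θ ⊆ ℤ²`. -/
def hookSet (Θ : Set Cell) (x : Cell) : Set Cell :=
  Θ ∩ ({y | ∃ k : ℤ, 0 ≤ k ∧ y = x + (k, 0)} ∪ {y | ∃ k : ℤ, 1 ≤ k ∧ y = x + (0, k)})

/-- The hook length of `x` in `Θ`. -/
noncomputable def hookLen (Θ : Set Cell) (x : Cell) : ℕ := (hookSet Θ x).ncard

/-- The hook length of a cell of the cylinder, computed via a lift. -/
noncomputable def cylHook (ω : Cell) (Θ : Set Cell) (x : Cyl ω) : ℕ :=
  hookLen Θ (Quotient.out x)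

/-- The `ℤω`-orbit of a cell. -/
def zline (ω y : Cell) : Set Cell := {z | ∃ k : ℤ, z = y + k • ω}

/-- `S + ℤω`. -/
def perClosure (ω : Cell) (S : Set Cell) : Set Cell := {z | ∃ y ∈ S, ∃ k : ℤ, z = y + k • ω}

/-- Translation of a set of cells by `u`. -/
def shiftSet (u : Cell) (S : Set Cell) : Set Cell := (· + u) '' S

/-- The semi-infinite diagram `λ̄ = {(a,b) : 1 ≤ a ≤ m, b ≤ λ_a}`. -/
def lowerDiag (m : ℤ) (lam : ℤ → ℤ) : Set Cell := {p | 1 ≤ p.1 ∧ p.1 ≤ m ∧ p.2 ≤ lam p.1}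

/-- The Young diagram `{(a,b) : 1 ≤ a ≤ m, 1 ≤ b ≤ λ_a}`. -/
def youngDiag (m : ℤ) (lam : ℤ → ℤ) : Set Cell :=
  {p | 1 ≤ p.1 ∧ p.1 ≤ m ∧ 1 ≤ p.2 ∧ p.2 ≤ lam p.1}

/-- The skew diagram `λ/μ = {(a,b) : 1 ≤ a ≤ m, μ_a < b ≤ λ_a}`. -/
def skewDiag (m : ℤ) (lam mu : ℤ → ℤ) : Set Cell :=
  {p | 1 ≤ p.1 ∧ p.1 ≤ m ∧ mu p.1 < p.2 ∧ p.2 ≤ lam p.1}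

/-- The periodic diagram `λ̃ = λ̄ + ℤ(m,−ℓ)`. -/
def perDiag (m l : ℤ) (lam : ℤ → ℤ) : Set Cell := perClosure (m, -l) (lowerDiag m lam)

/-- The cylindric diagram `λ̂ = π(λ̃)`. -/
def cylDiag (m l : ℤ) (lam : ℤ → ℤ) : Set (Cyl (m, -l)) := pr (m, -l) '' perDiag m l lam

/-- `λ ∈ P_{m,ℓ}`: an `ℓ`-restricted generalized partition of length `m`
(only the values `λ_1, …, λ_m` are relevant). -/
def IsRestricted (m l : ℤ) (lam : ℤ → ℤ) : Prop :=
  (∀ a : ℤ, 1 ≤ a → a < m → lam (a + 1) ≤ lam a) ∧ lam 1 - lam m ≤ l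

/-- `y` is a `D`-active cell (with ambient diagram `Θ`). -/
def IsActive (Θ D : Set Cell) (y : Cell) : Prop :=
  y ∈ D ∧ y + (1, 0) ∈ Θ \ D ∧ y + (0, 1) ∈ Θ \ D ∧ y + (1, 1) ∈ Θ \ D

/-- One elementary excitation inside `Θ`. -/
def exciteStep (Θ D E : Set Cell) : Prop :=
  ∃ y, IsActive Θ D y ∧ E = (D \ {y}) ∪ {y + (1, 1)}

/-- The excited diagrams of `M` in `Θ`. -/
def ExcitedSet (Θ M : Set Cell) : Set (Set Cell) :=
  {D | Relation.ReflTransGen (exciteStep Θ) M D}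

/-- One periodic elementary excitation inside `Θ`. -/
def pExciteStep (ω : Cell) (Θ D E : Set Cell) : Prop :=
  ∃ y, IsActive Θ D y ∧ E = (D \ zline ω y) ∪ zline ω (y + (1, 1))

/-- The periodic excited diagrams of `M` in `Θ`. -/
def PExcitedSet (ω : Cell) (Θ M : Set Cell) : Set (Set Cell) :=
  {D | Relation.ReflTransGen (pExciteStep ω Θ) M D}

/-- The cylindric excited diagrams: images under `π` of the periodic excited diagrams. -/
def CylExcitedSet (ω : Cell) (Θ M : Set Cell) : Set (Set (Cyl ω)) :=
  (fun D => pr ω '' D) '' PExcitedSet ω Θ M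

/-- A linear extension of `S` (with respect to a relation `R`): a bijection
`ε : S → {1,…,n}` with `ε x < ε y` whenever `R x y` and `x ≠ y`. -/
def IsLinExt {α : Type} (R : α → α → Prop) (S : Set α) (n : ℕ) (ε : S → Fin n) : Prop :=
  Function.Bijective ε ∧ ∀ x y : S, R (x : α) (y : α) → (x : α) ≠ (y : α) → ε x < ε y

/-- The number of linear extensions of `S`. -/
noncomputable def linExtCount {α : Type} (R : α → α → Prop) (S : Set α) (n : ℕ) : ℕ :=
  Nat.card {ε : S → Fin n // IsLinExt R S n ε}

/-- A reverse standard tableau on a (skew) diagram `S` of `n` cells. -/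
def IsRST (S : Set Cell) (n : ℕ) (ε : S → Fin n) : Prop :=
  Function.Bijective ε ∧
    (∀ x y : S, (y : Cell) = (x : Cell) + (0, 1) → ε y < ε x) ∧
    (∀ x y : S, (y : Cell) = (x : Cell) + (1, 0) → ε y < ε x)

/-- An `ℓ`-restricted reverse standard tableau on a skew diagram of length `m`. -/
def IsRSTl (m l : ℤ) (S : Set Cell) (n : ℕ) (ε : S → Fin n) : Prop :=
  IsRST S n ε ∧
    ∀ x y : S, (x : Cell).1 = 1 → (y : Cell) = (m, (x : Cell).2 - l) → ε x < ε y

/-- One lattice step: right by `(1,0)` or down by `(0,−1)`. -/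
def stepRel (a b : Cell) : Prop := b - a = (1, 0) ∨ b - a = (0, -1)

/-- `p` is (the list of cells of) a lattice path from `u` to `v`. -/
def IsLatticePathList (u v : Cell) (p : List Cell) : Prop :=
  p.head? = some u ∧ p.getLast? = some v ∧ p.Chain' stepRel

/-- `L(u,v)`: lattice paths from `u` to `v`, identified with their underlying sets of cells. -/
def LPath (u v : Cell) : Set (Set Cell) :=
  {S | ∃ p : List Cell, IsLatticePathList u v p ∧ S = {x | x ∈ p}}

/-- `L_Θ(u,v)`: lattice paths from `u` to `v` contained in `Θ`. -/
def LPathIn (Θ : Set Cell) (u v : Cell) : Set (Set Cell) := {S | S ∈ LPath u v ∧ S ⊆ Θ}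

/-- One lattice step on the cylinder. -/
def cylStep (ω : Cell) (x y : Cyl ω) : Prop :=
  ∃ u v : Cell, pr ω u = x ∧ pr ω v = y ∧ stepRel u v

/-- `S` is a non-intersecting loop of length `n` in the cylinder. -/
def IsNILoop (ω : Cell) (n : ℕ) (S : Set (Cyl ω)) : Prop :=
  ∃ u : ZMod n → Cyl ω, Function.Injective u ∧ S = Set.range u ∧
    ∀ i : ZMod n, cylStep ω (u i) (u (i + 1))

/-- `h^{s,t}_{m,ℓ}(x) = ℓ+m−a−b+dt+s+1` where `x = (a, b−dℓ)` with `2 ≤ b ≤ ℓ+1`, `d ≥ 0`. -/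
def hst (m l s t : ℤ) (x : Cell) : ℤ :=
  l + m - x.1 - x.2 + ((l + 1 - x.2) / l) * (t - l) + s + 1

/-- The hook lengths `h_i` of the bar case: `h_{ℓt+j} = (ℓ+1)t+j = i + (i−1)/ℓ`. -/
def hbar (l i : ℤ) : ℤ := i + (i - 1) / l

namespace L73

abbrev ct (x : Cell) : ℤ := x.1 - x.2

lemma smul_cell (k a b : ℤ) : k • ((a, b) : Cell) = (k * a, k * b) := by
  simp [Prod.smul_def, smul_eq_mul]

lemma pr_eq_iff {ω u v : Cell} : pr ω u = pr ω v ↔ ∃ k : ℤ, v = u + k • ω := by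
  rw [pr, QuotientAddGroup.eq, AddSubgroup.mem_zmultiples_iff]
  constructor
  · rintro ⟨k, hk⟩; exact ⟨k, by rw [hk]; abel⟩
  · rintro ⟨k, rfl⟩; exact ⟨k, by abel⟩

lemma k_eq_zero {m l : ℕ} (hm : 1 ≤ m) {u v : Cell} (hu1 : 1 ≤ u.1) (hu2 : u.1 ≤ m)
    (hv1 : 1 ≤ v.1) (hv2 : v.1 ≤ m) {k : ℤ}
    (h : v = u + k • (((m : ℤ), -(l : ℤ)) : Cell)) : k = 0 := by
  have h1 : v.1 = u.1 + k * m := by rw [h, smul_cell]; rfl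
  have hm' : (1 : ℤ) ≤ m := by exact_mod_cast hm
  rcases lt_trichotomy k 0 with hk | hk | hk
  · have : k * m ≤ -1 * m := mul_le_mul_of_nonneg_right (by omega) (by omega)
    exfalso; linarith
  · exact hk
  · have : 1 * m ≤ k * m := mul_le_mul_of_nonneg_right (by omega) (by omega)
    exfalso; linarith

lemma pr_inj_strip {m l : ℕ} (hm : 1 ≤ m) {u v : Cell} (hu1 : 1 ≤ u.1) (hu2 : u.1 ≤ m)
    (hv1 : 1 ≤ v.1) (hv2 : v.1 ≤ m)
    (h : pr ((m : ℤ), -(l : ℤ)) u = pr ((m : ℤ), -(l : ℤ)) v) : u = v := by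
  obtain ⟨k, hk⟩ := pr_eq_iff.1 h
  have h0 := k_eq_zero hm hu1 hu2 hv1 hv2 hk
  subst h0; simpa using hk.symm

lemma preimage_image_inter {m l : ℕ} (hm : 1 ≤ m) (lam : ℤ → ℤ) {p : Set Cell}
    (hp : p ⊆ lowerDiag m lam) :
    pr ((m : ℤ), -(l : ℤ)) ⁻¹' (pr ((m : ℤ), -(l : ℤ)) '' p) ∩ lowerDiag (m : ℤ) lam = p := by
  ext x
  constructor
  · rintro ⟨hx1, hx2⟩
    obtain ⟨y, hy, hpr⟩ := hx1
    have hyD := hp hy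
    have : y = x := pr_inj_strip hm hyD.1 hyD.2.1 hx2.1 hx2.2.1 hpr
    rwa [← this]
  · intro hx; exact ⟨⟨x, hx, rfl⟩, hp hx⟩

lemma image_sub_cylDiag {m l : ℕ} {lam : ℤ → ℤ} {p : Set Cell} (hp : p ⊆ lowerDiag m lam) :
    pr ((m : ℤ), -(l : ℤ)) '' p ⊆ cylDiag m l lam := by
  rintro _ ⟨x, hx, rfl⟩
  exact ⟨x, ⟨x, hp hx, 0, by simp⟩, rfl⟩

end L73
namespace L73

lemma stepRel_cases {a b : Cell} (h : stepRel a b) : b = a + (1, 0) ∨ b = a + (0, -1) := by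
  rcases h with h | h
  · left; rw [← sub_add_cancel b a, h]; abel
  · right; rw [← sub_add_cancel b a, h]; abel

lemma ct_step {a b : Cell} (h : stepRel a b) : ct b = ct a + 1 := by
  rcases stepRel_cases h with rfl | rfl <;>
    simp [ct, Prod.fst_add, Prod.snd_add] <;> ring

lemma snd_step {a b : Cell} (h : stepRel a b) : b.2 ≤ a.2 := by
  rcases stepRel_cases h with rfl | rfl <;> simp [Prod.snd_add]

lemma ct_get {q : List Cell} (hc : q.Chain' stepRel) (h0 : 0 < q.length) :
    ∀ j : ℕ, ∀ h : j < q.length,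
      ct (q.get ⟨j, h⟩) = ct (q.get ⟨0, h0⟩) + j := by
  intro j
  induction j with
  | zero => intro h; simp
  | succ j ih =>
    intro h
    have hj : j < q.length - 1 := by omega
    have hstep := List.isChain_iff_getElem.mp hc j (by omega)
    have h2 := ct_step hstep
    have h3 : ct (q.get ⟨j + 1, h⟩) = ct (q.get ⟨j, by omega⟩) + 1 := h2
    rw [h3, ih (by omega)]
    push_cast; ring

lemma snd_le_head : ∀ {q : List Cell}, q.Chain' stepRel → ∀ {u : Cell}, q.head? = some u →
    ∀ x ∈ q, x.2 ≤ u.2 := by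
  intro q
  induction q with
  | nil => intro _ u hq; simp at hq
  | cons a t ih =>
    intro hc u hq x hx
    simp only [List.head?_cons, Option.some.injEq] at hq
    subst hq
    rcases List.mem_cons.mp hx with rfl | hx
    · exact le_refl _
    · cases t with
      | nil => simp at hx
      | cons b t' =>
        obtain ⟨hab, hc'⟩ := List.isChain_cons_cons.mp hc
        have := ih hc' rfl x hx
        exact le_trans this (snd_step hab)

lemma head?_mem {q : List Cell} {u : Cell} (hq : q.head? = some u) : u ∈ q := by
  cases q with
  | nil => simp at hq
  | cons a t => simp only [List.head?_cons, Option.some.injEq] at hq; subst hq; simp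

lemma head?_get {q : List Cell} {u : Cell} (hq : q.head? = some u) (h0 : 0 < q.length) :
    q.get ⟨0, h0⟩ = u := by
  cases q with
  | nil => simp at h0
  | cons a t => simp only [List.head?_cons, Option.some.injEq] at hq; subst hq; rfl

lemma getLast?_get {q : List Cell} {v : Cell} (hq : q.getLast? = some v) (h0 : 0 < q.length) :
    q.get ⟨q.length - 1, by omega⟩ = v := by
  have hne : q ≠ [] := List.ne_nil_of_length_pos h0
  rw [List.getLast?_eq_getLast hne, Option.some.injEq] at hq
  rw [← hq, List.getLast_eq_getElem]; rfl

lemma path_len {u v : Cell} {q : List Cell} (h : IsLatticePathList u v q) :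
    (q.length : ℤ) = ct v - ct u + 1 := by
  obtain ⟨hh, hl, hc⟩ := h
  have h0 : 0 < q.length := by
    cases q with
    | nil => simp at hh
    | cons a t => simp
  have hu := head?_get hh h0
  have hv := getLast?_get hl h0
  have := ct_get hc h0 (q.length - 1) (by omega)
  rw [hu, hv] at this
  omega

end L73
namespace L73

lemma start_max {m l : ℕ} {lam : ℤ → ℤ} {i : ℕ} {p : Set Cell}
    (hp : p ∈ LPathIn (lowerDiag m lam) ((1:ℤ), lam 1 - (i:ℤ))
      ((m:ℤ), lam 1 - (l:ℤ) - (i:ℤ))) :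
    ((1:ℤ), lam 1 - (i:ℤ)) ∈ p ∧ ∀ x ∈ p, x.2 ≤ lam 1 - (i:ℤ) := by
  obtain ⟨⟨q, ⟨hh, hlast, hc⟩, rfl⟩, hsub⟩ := hp
  exact ⟨head?_mem hh, fun x hx => snd_le_head hc hh x hx⟩

lemma forward {m l : ℕ} (hm : 1 ≤ m) (hl : 1 ≤ l) (lam : ℤ → ℤ) (i : ℕ)
    {p : Set Cell}
    (hp : p ∈ LPathIn (lowerDiag m lam) ((1:ℤ), lam 1 - (i:ℤ))
      ((m:ℤ), lam 1 - (l:ℤ) - (i:ℤ))) :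
    IsNILoop ((m:ℤ), -(l:ℤ)) (l + m) (pr ((m:ℤ), -(l:ℤ)) '' p) := by
  obtain ⟨⟨q, hpath, rfl⟩, hsub⟩ := hp
  obtain ⟨hh, hlast, hc⟩ := hpath
  haveI : NeZero (l + m) := ⟨by omega⟩
  haveI : Fact (1 < l + m) := ⟨by omega⟩
  have hlenZ := path_len ⟨hh, hlast, hc⟩
  have hlen : q.length = l + m := by simp only [ct] at hlenZ; omega
  have h0 : 0 < q.length := by omega
  have hu0 : q.get ⟨0, h0⟩ = ((1:ℤ), lam 1 - (i:ℤ)) := head?_get hh h0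
  have hvlast : q.get ⟨q.length - 1, by omega⟩ = ((m:ℤ), lam 1 - (l:ℤ) - (i:ℤ)) :=
    getLast?_get hlast h0
  have hmemD : ∀ (j : ℕ) (h : j < q.length), q.get ⟨j, h⟩ ∈ lowerDiag m lam := by
    intro j h
    exact hsub (List.get_mem q ⟨j, h⟩)
  have hjlt : ∀ j : ZMod (l + m), j.val < q.length := by
    intro j; rw [hlen]; exact j.val_lt
  refine ⟨fun j => pr _ (q.get ⟨j.val, hjlt j⟩), ?_, ?_, ?_⟩
  · intro j j' h
    have hD := hmemD j.val (hjlt j)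
    have hD' := hmemD j'.val (hjlt j')
    have heq : q.get ⟨j.val, hjlt j⟩ = q.get ⟨j'.val, hjlt j'⟩ :=
      pr_inj_strip hm hD.1 hD.2.1 hD'.1 hD'.2.1 h
    have hct := congrArg ct heq
    rw [ct_get hc h0 j.val (hjlt j), ct_get hc h0 j'.val (hjlt j')] at hct
    have : j.val = j'.val := by omega
    exact ZMod.val_injective _ this
  · ext x
    simp only [Set.mem_image, Set.mem_range]
    constructor
    · rintro ⟨y, hy, rfl⟩
      obtain ⟨⟨j, hj⟩, rfl⟩ := List.mem_iff_get.mp hy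
      refine ⟨(j : ZMod (l + m)), ?_⟩
      have hv : ((j : ZMod (l + m))).val = j := ZMod.val_cast_of_lt (by omega)
      have : (⟨((j : ZMod (l + m))).val, hjlt _⟩ : Fin q.length) = ⟨j, hj⟩ := Fin.ext hv
      rw [this]
    · rintro ⟨j, rfl⟩
      exact ⟨q.get ⟨j.val, hjlt j⟩, List.get_mem q ⟨j.val, hjlt j⟩, rfl⟩
  · intro j
    have hval : (j + 1).val = (j.val + 1) % (l + m) := by
      rw [ZMod.val_add, ZMod.val_one]
    by_cases hcase : j.val + 1 < l + m
    · have h1 : (j + 1).val = j.val + 1 := by rw [hval, Nat.mod_eq_of_lt hcase]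
      show cylStep _ (pr _ (q.get ⟨j.val, hjlt j⟩)) (pr _ (q.get ⟨(j+1).val, hjlt _⟩))
      refine ⟨q.get ⟨j.val, hjlt j⟩, q.get ⟨j.val + 1, by omega⟩, rfl, ?_, ?_⟩
      · have h2 : (⟨(j+1).val, hjlt _⟩ : Fin q.length) = ⟨j.val + 1, by omega⟩ := Fin.ext h1
        rw [h2]
      · exact List.isChain_iff_getElem.mp hc j.val (by omega)
    · have hjv : j.val = l + m - 1 := by have := j.val_lt; omega
      have h1 : (j + 1).val = 0 := by
        rw [hval, show j.val + 1 = l + m by omega, Nat.mod_self]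
      have hgj : q.get ⟨j.val, hjlt j⟩ = ((m:ℤ), lam 1 - (l:ℤ) - (i:ℤ)) := by
        have h3 : (⟨j.val, hjlt j⟩ : Fin q.length) = ⟨q.length - 1, by omega⟩ :=
          Fin.ext (show j.val = q.length - 1 by omega)
        rw [h3, hvlast]
      show cylStep _ (pr _ (q.get ⟨j.val, hjlt j⟩)) (pr _ (q.get ⟨(j+1).val, hjlt _⟩))
      refine ⟨q.get ⟨j.val, hjlt j⟩,
        ((1:ℤ), lam 1 - (i:ℤ)) + ((m:ℤ), -(l:ℤ)), rfl, ?_, ?_⟩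
      · have h2 : (⟨(j+1).val, hjlt _⟩ : Fin q.length) = ⟨0, h0⟩ := Fin.ext h1
        rw [h2, hu0]
        exact (pr_eq_iff.2 ⟨1, by abel⟩).symm
      · left
        rw [hgj]
        show (((1:ℤ), lam 1 - (i:ℤ)) + ((m:ℤ), -(l:ℤ))) - ((m:ℤ), lam 1 - (l:ℤ) - (i:ℤ)) = (1, 0)
        simp [Prod.ext_iff]
        ring

end L73
namespace L73

lemma k_cases {M : ℤ} (hM : 1 ≤ M) {x y k : ℤ} (h : y = x + k * M)
    (hx1 : 1 ≤ x) (hx2 : x ≤ M + 1) (hy1 : 1 ≤ y) (hy2 : y ≤ M) :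
    k = 0 ∨ (k = -1 ∧ x = M + 1) := by
  rcases lt_trichotomy k 0 with hk | hk | hk
  · rcases lt_trichotomy k (-1) with hk2 | hk2 | hk2
    · exfalso
      have : k * M ≤ -2 * M := mul_le_mul_of_nonneg_right (by omega) (by omega)
      linarith
    · right; refine ⟨hk2, ?_⟩; subst hk2; omega
    · exfalso; omega
  · left; exact hk
  · exfalso
    have : 1 * M ≤ k * M := mul_le_mul_of_nonneg_right (by omega) (by omega)
    linarith

lemma step_classification {m l : ℕ} (hm : 1 ≤ m) (hl : 1 ≤ l) {lam : ℤ → ℤ}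
    {v v' a b : Cell} (hvD : v ∈ lowerDiag (m:ℤ) lam) (hvD' : v' ∈ lowerDiag (m:ℤ) lam)
    {k₁ k₂ : ℤ} (hk₁ : a = v + k₁ • (((m:ℤ), -(l:ℤ)) : Cell))
    (hk₂ : b = v' + k₂ • (((m:ℤ), -(l:ℤ)) : Cell)) (hab : stepRel a b) :
    (stepRel v v' ∧ ct v' - ct v = 1) ∨
    (v.1 = m ∧ v' = v + (1 - (m:ℤ), (l:ℤ)) ∧ ct v' - ct v = 1 - ((l:ℤ) + m)) := by
  have hm' : (1:ℤ) ≤ m := by exact_mod_cast hm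
  have h1 : 1 ≤ v.1 := hvD.1
  have h2 : v.1 ≤ (m:ℤ) := hvD.2.1
  have h1' : 1 ≤ v'.1 := hvD'.1
  have h2' : v'.1 ≤ (m:ℤ) := hvD'.2.1
  rcases stepRel_cases hab with hs | hs
  · -- horizontal step
    have hv1 : v' = v + (1, 0) + (k₁ - k₂) • (((m:ℤ), -(l:ℤ)) : Cell) := by
      have h' : v' = a + (1, 0) - k₂ • (((m:ℤ), -(l:ℤ)) : Cell) := by
        rw [hs] at hk₂
        exact eq_sub_of_add_eq hk₂.symm
      rw [h', hk₁, sub_smul]; abel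
    have hfst : v'.1 = (v.1 + 1) + (k₁ - k₂) * m := by
      rw [hv1, smul_cell]
      simp [Prod.fst_add] <;> ring
    rcases k_cases hm' hfst (by omega) (by omega) h1' h2' with hk | ⟨hk, hx⟩
    · left
      have hv2 : v' = v + (1, 0) := by rw [hv1, hk, zero_smul, add_zero]
      refine ⟨Or.inl (by rw [hv2]; abel), ?_⟩
      rw [hv2]; simp [ct, Prod.fst_add, Prod.snd_add] <;> ring
    · right
      have hv2 : v' = v + (1 - (m:ℤ), (l:ℤ)) := by
        rw [hv1, hk, smul_cell]
        simp [Prod.ext_iff, Prod.fst_add, Prod.snd_add] <;> omega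
      refine ⟨by omega, hv2, ?_⟩
      rw [hv2]; simp [ct, Prod.fst_add, Prod.snd_add] <;> push_cast <;> ring
  · -- vertical step
    left
    have hv1 : v' = v + (0, -1) + (k₁ - k₂) • (((m:ℤ), -(l:ℤ)) : Cell) := by
      have h' : v' = a + (0, -1) - k₂ • (((m:ℤ), -(l:ℤ)) : Cell) := by
        rw [hs] at hk₂
        exact eq_sub_of_add_eq hk₂.symm
      rw [h', hk₁, sub_smul]; abel
    have hfst : v'.1 = v.1 + (k₁ - k₂) * m := by
      rw [hv1, smul_cell]
      simp [Prod.fst_add] <;> ring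
    have hk0 : k₁ - k₂ = 0 := by
      rcases k_cases hm' hfst h1 (by omega) h1' h2' with hk | ⟨hk, hx⟩
      · exact hk
      · exfalso; omega
    have hv2 : v' = v + (0, -1) := by rw [hv1, hk0, zero_smul, add_zero]
    refine ⟨Or.inr (by rw [hv2]; abel), ?_⟩
    rw [hv2]; simp [ct, Prod.fst_add, Prod.snd_add] <;> ring

end L73
namespace L73

set_option maxHeartbeats 1000000 in
lemma backward {m l : ℕ} (hm : 1 ≤ m) (hl : 1 ≤ l) {lam : ℤ → ℤ}
    (hlam : IsRestricted m l lam)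
    {S : Set (Cyl ((m:ℤ), -(l:ℤ)))} (hS : IsNILoop ((m:ℤ), -(l:ℤ)) (l + m) S)
    (hsub : S ⊆ cylDiag m l lam) :
    ∃ (i : ℕ) (p : Set Cell),
      p ∈ LPathIn (lowerDiag m lam) ((1:ℤ), lam 1 - (i:ℤ))
        ((m:ℤ), lam 1 - (l:ℤ) - (i:ℤ)) ∧
      pr ((m:ℤ), -(l:ℤ)) '' p = S := by
  classical
  haveI : NeZero (l + m) := ⟨by omega⟩
  obtain ⟨U, hUinj, rfl, hUstep⟩ := hS
  have hlift : ∀ j : ZMod (l + m), ∃ y, y ∈ lowerDiag (m:ℤ) lam ∧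
      pr ((m:ℤ), -(l:ℤ)) y = U j := by
    intro j
    obtain ⟨w, hw, hpr⟩ := hsub ⟨j, rfl⟩
    obtain ⟨y, hy, k, rfl⟩ := hw
    exact ⟨y, hy, by rw [← hpr]; exact pr_eq_iff.2 ⟨k, rfl⟩⟩
  choose v hvD hvpr using hlift
  have hclass : ∀ j : ZMod (l + m),
      (stepRel (v j) (v (j + 1)) ∧ ct (v (j + 1)) - ct (v j) = 1) ∨
      ((v j).1 = m ∧ v (j + 1) = v j + (1 - (m:ℤ), (l:ℤ)) ∧
        ct (v (j + 1)) - ct (v j) = 1 - ((l:ℤ) + m)) := by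
    intro j
    obtain ⟨a, b, ha, hb, hab⟩ := hUstep j
    obtain ⟨k₁, hk₁⟩ := pr_eq_iff.1 ((hvpr j).trans ha.symm)
    obtain ⟨k₂, hk₂⟩ := pr_eq_iff.1 ((hvpr (j + 1)).trans hb.symm)
    exact step_classification hm hl (hvD j) (hvD (j + 1)) hk₁ hk₂ hab
  -- telescoping sum: exactly one wrap
  have hsum : ∑ j : ZMod (l + m), (ct (v (j + 1)) - ct (v j)) = 0 := by
    rw [Finset.sum_sub_distrib]
    rw [Fintype.sum_equiv (Equiv.addRight (1 : ZMod (l + m)))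
      (fun j => ct (v (j + 1))) (fun j => ct (v j)) (fun j => rfl)]
    exact sub_self _
  set W := Finset.univ.filter
    (fun j : ZMod (l + m) => ct (v (j + 1)) - ct (v j) ≠ 1) with hWdef
  have hWcard : W.card = 1 := by
    have h1 : ∑ j : ZMod (l + m), ((ct (v (j + 1)) - ct (v j)) - 1) = -((l:ℤ) + m) := by
      rw [Finset.sum_sub_distrib, hsum]
      simp [Finset.card_univ, ZMod.card]
    have h2 : ∑ j ∈ W, ((ct (v (j + 1)) - ct (v j)) - 1)
        = ∑ j : ZMod (l + m), ((ct (v (j + 1)) - ct (v j)) - 1) :=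
      Finset.sum_subset (Finset.subset_univ W) (fun x _ hx => by
        simp only [hWdef, Finset.mem_filter, Finset.mem_univ, true_and, not_not] at hx
        omega)
    have h3 : ∀ j ∈ W, ((ct (v (j + 1)) - ct (v j)) - 1) = -((l:ℤ) + m) := by
      intro j hj
      simp only [hWdef, Finset.mem_filter, Finset.mem_univ, true_and] at hj
      rcases hclass j with ⟨_, h⟩ | ⟨_, _, h⟩
      · exact absurd h hj
      · omega
    rw [Finset.sum_congr rfl h3, Finset.sum_const, nsmul_eq_mul, h1] at h2
    have hn0 : -((l:ℤ) + m) ≠ 0 := by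
      have : (1:ℤ) ≤ l := by exact_mod_cast hl
      have : (1:ℤ) ≤ m := by exact_mod_cast hm
      omega
    have := mul_right_cancel₀ hn0 (h2.trans (one_mul (-((l:ℤ) + m))).symm)
    exact_mod_cast this
  obtain ⟨j0, hj0⟩ := Finset.card_eq_one.mp hWcard
  have hj0W : j0 ∈ W := hj0 ▸ Finset.mem_singleton_self j0
  have hwrap : (v j0).1 = m ∧ v (j0 + 1) = v j0 + (1 - (m:ℤ), (l:ℤ)) := by
    simp only [hWdef, Finset.mem_filter, Finset.mem_univ, true_and] at hj0W
    rcases hclass j0 with ⟨_, h⟩ | ⟨h1, h2, _⟩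
    · exact absurd h hj0W
    · exact ⟨h1, h2⟩
  have hnormal : ∀ j, j ≠ j0 → stepRel (v j) (v (j + 1)) := by
    intro j hj
    have hjW : j ∉ W := by rw [hj0]; simp [hj]
    simp only [hWdef, Finset.mem_filter, Finset.mem_univ, true_and, not_not] at hjW
    rcases hclass j with ⟨h, _⟩ | ⟨_, _, h⟩
    · exact h
    · exfalso
      have h1 : (1:ℤ) ≤ l := by exact_mod_cast hl
      have h2 : (1:ℤ) ≤ m := by exact_mod_cast hm
      omega
  -- the start cell
  have hs1 : (v (j0 + 1)).1 = 1 := by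
    rw [hwrap.2]
    simp [Prod.fst_add] <;> omega
  have hs2 : (v (j0 + 1)).2 ≤ lam 1 := by
    have := (hvD (j0 + 1)).2.2
    rwa [hs1] at this
  set i : ℕ := (lam 1 - (v (j0 + 1)).2).toNat with hidef
  have hi : (i : ℤ) = lam 1 - (v (j0 + 1)).2 := Int.toNat_of_nonneg (by omega)
  have hstart : v (j0 + 1) = ((1:ℤ), lam 1 - (i:ℤ)) := by
    have := hs1
    refine Prod.ext this ?_
    omega
  have hlastv : v j0 = ((m:ℤ), lam 1 - (l:ℤ) - (i:ℤ)) := by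
    refine Prod.ext hwrap.1 ?_
    have h2 := congrArg Prod.snd hwrap.2
    simp only [Prod.snd_add] at h2
    omega
  -- the list
  set g : ℕ → Cell := fun t => v (j0 + 1 + (t : ZMod (l + m))) with hgdef
  set q : List Cell := (List.range (l + m)).map g with hqdef
  have hqlen : q.length = l + m := by simp [hqdef]
  have hqget : ∀ (t : ℕ) (h : t < q.length), q.get ⟨t, h⟩ = g t := by
    intro t h
    simp [hqdef, List.getElem_map]
  have hqne : q ≠ [] := List.ne_nil_of_length_pos (by omega)
  refine ⟨i, {x | x ∈ q}, ⟨⟨q, ⟨?_, ?_, ?_⟩, rfl⟩, ?_⟩, ?_⟩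
  · -- head
    have h0 : (0:ℕ) < q.length := by omega
    rw [List.head?_eq_getElem?, List.getElem?_eq_getElem h0]
    congr 1
    rw [← List.get_eq_getElem (l := q) (i := ⟨0, h0⟩), hqget 0 h0, hgdef]
    simp only [Nat.cast_zero, add_zero]
    exact hstart
  · -- getLast
    have hlt : q.length - 1 < q.length := by omega
    rw [List.getLast?_eq_getElem?, List.getElem?_eq_getElem hlt]
    congr 1
    rw [← List.get_eq_getElem (l := q) (i := ⟨q.length - 1, hlt⟩), hqget (q.length - 1) hlt]
    have hidx : j0 + 1 + ((q.length - 1 : ℕ) : ZMod (l + m)) = j0 := by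
      have : (1 : ZMod (l + m)) + ((q.length - 1 : ℕ) : ZMod (l + m))
          = ((1 + (q.length - 1) : ℕ) : ZMod (l + m)) := by push_cast; ring
      rw [add_assoc, this, show 1 + (q.length - 1) = l + m by omega,
        ZMod.natCast_self, add_zero]
    rw [hgdef]
    simp only []
    rw [hidx]
    exact hlastv
  · -- chain'
    refine List.isChain_iff_getElem.mpr ?_
    intro t ht
    show stepRel (q.get ⟨t, by omega⟩) (q.get ⟨t + 1, by omega⟩)
    rw [hqget t (by omega), hqget (t + 1) (by omega), hgdef]
    simp only []
    have hne : j0 + 1 + (t : ZMod (l + m)) ≠ j0 := by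
      intro heq
      have heq' : j0 + ((1 : ZMod (l + m)) + (t : ZMod (l + m))) = j0 + 0 := by
        rw [← add_assoc, heq, add_zero]
      have h0 : ((1 + t : ℕ) : ZMod (l + m)) = 0 := by
        push_cast
        exact add_left_cancel heq'
      have hdvd : (l + m) ∣ (1 + t) := by
        exact (ZMod.natCast_eq_zero_iff _ _).mp h0
      have := Nat.le_of_dvd (by omega) hdvd
      have hql : q.length = l + m := hqlen
      omega
    have hstep := hnormal _ hne
    have hcast : j0 + 1 + (t : ZMod (l + m)) + 1 = j0 + 1 + ((t + 1 : ℕ) : ZMod (l + m)) := by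
      push_cast; ring
    rwa [hcast] at hstep
  · -- subset of lowerDiag
    intro x hx
    have hx' : x ∈ q := hx
    rw [hqdef] at hx'
    obtain ⟨t, _, rfl⟩ := List.mem_map.mp hx'
    exact hvD _
  · -- image equals S
    ext c
    constructor
    · rintro ⟨x, hx, rfl⟩
      have hx' : x ∈ q := hx
      rw [hqdef] at hx'
      obtain ⟨t, _, rfl⟩ := List.mem_map.mp hx'
      exact ⟨j0 + 1 + (t : ZMod (l + m)), (hvpr _).symm ▸ (hvpr _)⟩
    · rintro ⟨j, rfl⟩
      refine ⟨v j, ?_, hvpr j⟩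
      show v j ∈ q
      rw [hqdef]
      refine List.mem_map.2 ⟨(j - j0 - 1).val, List.mem_range.2 (ZMod.val_lt _), ?_⟩
      rw [hgdef]
      simp only []
      congr 1
      have ht : (((j - j0 - 1).val : ℕ) : ZMod (l + m)) = j - j0 - 1 :=
        ZMod.natCast_rightInverse _
      rw [ht]; ring

end L73

open L73

/-- **Lemma 7.3**: for `λ ∈ P_{m,ℓ}`, the projection `π` induces a bijection from
`⨆_{i≥0} L_λ((1,λ_1−i),(m,λ_1−ℓ−i))` onto the set `L̂_λ` of non-intersecting loops
contained in `λ̂`, with inverse `p ↦ π⁻¹(p) ∩ λ̄`. -/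
theorem lattice_paths_to_loops_bijection (m l : ℕ) (hm : 1 ≤ m) (hl : 1 ≤ l)
    (lam : ℤ → ℤ) (hlam : IsRestricted m l lam) :
    Function.Injective
      (fun z : Σ i : ℕ, ↥(LPathIn (lowerDiag m lam)
            ((1 : ℤ), lam 1 - (i : ℤ)) ((m : ℤ), lam 1 - (l : ℤ) - (i : ℤ))) =>
        pr ((m : ℤ), -(l : ℤ)) '' (z.2 : Set Cell)) ∧
    Set.range
      (fun z : Σ i : ℕ, ↥(LPathIn (lowerDiag m lam)
            ((1 : ℤ), lam 1 - (i : ℤ)) ((m : ℤ), lam 1 - (l : ℤ) - (i : ℤ))) =>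
        pr ((m : ℤ), -(l : ℤ)) '' (z.2 : Set Cell)) =
      {S : Set (Cyl ((m : ℤ), -(l : ℤ))) |
        IsNILoop ((m : ℤ), -(l : ℤ)) (l + m) S ∧ S ⊆ cylDiag m l lam} ∧
    ∀ z : Σ i : ℕ, ↥(LPathIn (lowerDiag m lam)
          ((1 : ℤ), lam 1 - (i : ℤ)) ((m : ℤ), lam 1 - (l : ℤ) - (i : ℤ))),
      pr ((m : ℤ), -(l : ℤ)) ⁻¹' (pr ((m : ℤ), -(l : ℤ)) '' (z.2 : Set Cell)) ∩
          lowerDiag m lam = (z.2 : Set Cell) := by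
  refine ⟨?_, ?_, ?_⟩
  · rintro ⟨i, p, hp⟩ ⟨i', p', hp'⟩ h
    simp only [] at h
    have h3 := preimage_image_inter (l := l) hm lam hp.2
    have h3' := preimage_image_inter (l := l) hm lam hp'.2
    have hpp' : p = p' := by rw [← h3, h, h3']
    obtain ⟨hmem, hmax⟩ := start_max (m := m) (l := l) hp
    obtain ⟨hmem', hmax'⟩ := start_max (m := m) (l := l) hp'
    have hii : (i : ℤ) = (i' : ℤ) := by
      have h1 : lam 1 - (i : ℤ) ≤ lam 1 - (i' : ℤ) := hmax' _ (hpp' ▸ hmem)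
      have h2 : lam 1 - (i' : ℤ) ≤ lam 1 - (i : ℤ) := hmax _ (hpp'.symm ▸ hmem')
      omega
    have hii' : i = i' := by exact_mod_cast hii
    subst hii'
    subst hpp'
    rfl
  · ext S
    constructor
    · rintro ⟨⟨i, p, hp⟩, rfl⟩
      exact ⟨forward hm hl lam i hp, image_sub_cylDiag hp.2⟩
    · rintro ⟨hloop, hsubS⟩
      obtain ⟨i, p, hp, him⟩ := backward hm hl hlam hloop hsubS
      exact ⟨⟨i, ⟨p, hp⟩⟩, him⟩
  · rintro ⟨i, p, hp⟩
    exact preimage_image_inter hm lam hp.2
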